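/- Let q be a power of a prime p, let n ≥ 2, let ζ be a primitive element of F_{q^n}, and let w be an integer with 0 ≤ w ≤ n; if q = 2, further assume w ≠ n. Then for every k ∈ Z/(q^n−1)Z, σ_w(ζ^k) = F_ζ[δ_w](k), where δ_w is viewed as taking values in F_{q^n} via the prime field embedding. -/

import Mathlib

open scoped Classical

noncomputable section

/-- `δ_w : Z/(q^n-1)Z → F`, the characteristic function of the set `Ω(w)` of
elements whose canonical representative is `q^{i_1} + ⋯ + q^{i_w}` for some
`0 ≤ i_1 < ⋯ < i_w ≤ n-1` (for `w = 0` this is the Kronecker delta at `0`). -/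
def deltaFn (F : Type*) [Zero F] [One F] (q n w : ℕ) : ZMod (q ^ n - 1) → F :=
  fun k =>
    if ∃ s ∈ Finset.powersetCard w (Finset.range n), k.val = ∑ i ∈ s, q ^ i then 1
    else 0

/-- The characteristic elementary symmetric function
`σ_w(ξ) = ∑_{0 ≤ i_1 < ⋯ < i_w ≤ n-1} ξ^{q^{i_1} + ⋯ + q^{i_w}}`
(evaluated on `F_{q^n}`). -/
def sigmaFn {F : Type*} [CommRing F] (q n w : ℕ) (ξ : F) : F :=
  ∑ s ∈ Finset.powersetCard w (Finset.range n), ξ ^ (∑ i ∈ s, q ^ i)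

/-- Lemma 4.1: for a primitive element `ζ` of `F_{q^n}` and `0 ≤ w ≤ n`
(with `w ≠ n` if `q = 2`), `σ_w(ζ^k) = F_ζ[δ_w](k)` for all `k ∈ Z/(q^n-1)Z`,
where `δ_w` is viewed as taking values in `F_{q^n}`. -/
theorem sigma_eq_dft_delta
    (q n : ℕ) (hn : 2 ≤ n)
    (Fqn : Type) [Field Fqn] [Fintype Fqn] (hqn : Fintype.card Fqn = q ^ n)
    [NeZero (q ^ n - 1)]
    (ζ : Fqn) (hζ : orderOf ζ = q ^ n - 1)
    (w : ℕ) (hw : w ≤ n) (hq2 : q = 2 → w ≠ n) :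
    ∀ k : ZMod (q ^ n - 1),
      sigmaFn q n w (ζ ^ k.val) =
        ∑ j : ZMod (q ^ n - 1), deltaFn Fqn q n w j * ζ ^ (k.val * j.val) := by
  intro k
  have hN : q ^ n - 1 ≠ 0 := NeZero.ne _
  have hq : 2 ≤ q := by
    by_contra h
    push_neg at h
    apply hN
    interval_cases q
    · rw [Nat.zero_pow (by omega : 0 < n)]
    · simp
  -- every admissible sum is `< q ^ n - 1`
  have hlt : ∀ s ∈ Finset.powersetCard w (Finset.range n),
      (∑ i ∈ s, q ^ i) < q ^ n - 1 := by
    intro s hs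
    rw [Finset.mem_powersetCard] at hs
    obtain ⟨hsub, hcard⟩ := hs
    rcases Nat.lt_or_ge q 3 with h3 | h3
    · -- q = 2
      have hq2' : q = 2 := by omega
      subst hq2'
      have hne : s ≠ Finset.range n := by
        intro h
        exact hq2 rfl (by rw [h, Finset.card_range] at hcard; omega)
      have h1 : (∑ i ∈ s, 2 ^ i) < 2 ^ n :=
        Nat.geomSum_lt le_rfl (fun k hk => Finset.mem_range.mp (hsub hk))
      have h2 : (∑ i ∈ s, 2 ^ i) ≠ 2 ^ n - 1 := by
        intro h
        apply hne
        apply Finset.geomSum_injective (n := 2) le_rfl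
        simp only [h]
        rw [Nat.geomSum_eq le_rfl n]
        simp
      omega
    · -- q ≥ 3
      have hle : (∑ i ∈ s, q ^ i) ≤ ∑ i ∈ Finset.range n, q ^ i :=
        Finset.sum_le_sum_of_subset hsub
      rw [Nat.geomSum_eq hq n] at hle
      have hd : (q ^ n - 1) / (q - 1) ≤ (q ^ n - 1) / 2 :=
        Nat.div_le_div_left (by omega) (by omega)
      have hqn2 : 3 ≤ q ^ n :=
        le_trans h3 (Nat.le_self_pow (by omega) q)
      have hhalf : (q ^ n - 1) / 2 < q ^ n - 1 :=
        Nat.div_lt_self (by omega) (by omega)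
      omega
  classical
  -- rewrite the RHS as a sum over the `j` with `δ_w j = 1`
  have hrhs : (∑ j : ZMod (q ^ n - 1), deltaFn Fqn q n w j * ζ ^ (k.val * j.val)) =
      ∑ j ∈ Finset.univ.filter (fun j : ZMod (q ^ n - 1) =>
        ∃ s ∈ Finset.powersetCard w (Finset.range n), j.val = ∑ i ∈ s, q ^ i),
        ζ ^ (k.val * j.val) := by
    rw [Finset.sum_filter]
    apply Finset.sum_congr rfl
    intro j _
    unfold deltaFn
    split <;> simp
  rw [hrhs]
  unfold sigmaFn
  refine Finset.sum_bij (fun s _ => ((∑ i ∈ s, q ^ i : ℕ) : ZMod (q ^ n - 1)))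
    ?_ ?_ ?_ ?_
  · intro s hs
    rw [Finset.mem_filter]
    refine ⟨Finset.mem_univ _, s, hs, ?_⟩
    exact ZMod.val_cast_of_lt (hlt s hs)
  · intro s hs t ht h
    have hv : (((∑ i ∈ s, q ^ i : ℕ) : ZMod (q ^ n - 1))).val =
        (((∑ i ∈ t, q ^ i : ℕ) : ZMod (q ^ n - 1))).val := by rw [h]
    rw [ZMod.val_cast_of_lt (hlt s hs), ZMod.val_cast_of_lt (hlt t ht)] at hv
    exact Finset.geomSum_injective hq hv
  · intro j hj
    rw [Finset.mem_filter] at hj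
    obtain ⟨-, s, hs, hval⟩ := hj
    refine ⟨s, hs, ?_⟩
    show ((∑ i ∈ s, q ^ i : ℕ) : ZMod (q ^ n - 1)) = j
    rw [← hval, ZMod.natCast_val, ZMod.cast_id]
  · intro s hs
    show (ζ ^ k.val) ^ (∑ i ∈ s, q ^ i) = ζ ^ (k.val * (((∑ i ∈ s, q ^ i : ℕ) : ZMod (q ^ n - 1))).val)
    rw [ZMod.val_cast_of_lt (hlt s hs), ← pow_mul]
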